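/- In the 2×2 hospital game with P₁ = 1000, P₂ = 4, a₁ = 1/4, a₂ = 3/4 (so the payoff matrix is: both choose r₁ gives (250, 750); q₁ chooses r₁ and q₂ chooses r₂ gives (1000, 4); q₁ chooses r₂ and q₂ chooses r₁ gives (4, 1000); both choose r₂ gives (1, 3)), the profile in which both hospitals choose r₁ is a Nash equilibrium, and it is the unique Nash equilibrium of the game; in particular in the unique Nash equilibrium the two hospitals do not diversify their choices. -/
import Mathlib


/-- The two wards a hospital can choose to make excel. -/
inductive Ward : Type
  | r1 | r2
deriving DecidableEq

open Ward

/-- The size of the patient group associated with a ward. -/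
def grp (P1 P2 : ℝ) : Ward → ℝ
  | r1 => P1
  | r2 => P2

/-- Payoff of hospital q₁ when q₁ chooses `s1` and q₂ chooses `s2`:
if both choose the same ward, q₁ gets the fraction `a1` of that ward's group;
otherwise q₁ gets the full group of its chosen ward. -/
def pay1 (P1 P2 a1 : ℝ) (s1 s2 : Ward) : ℝ :=
  if s1 = s2 then grp P1 P2 s1 * a1 else grp P1 P2 s1

/-- Payoff of hospital q₂ when q₁ chooses `s1` and q₂ chooses `s2`:
if both choose the same ward, q₂ gets the fraction `a2` of that ward's group;
otherwise q₂ gets the full group of its chosen ward. -/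
def pay2 (P1 P2 a2 : ℝ) (s1 s2 : Ward) : ℝ :=
  if s1 = s2 then grp P1 P2 s2 * a2 else grp P1 P2 s2

/-- A strategy profile `(s1, s2)` is a Nash equilibrium if neither hospital can
strictly increase its payoff by unilaterally changing its strategy. -/
def IsNash (P1 P2 a1 a2 : ℝ) (s1 s2 : Ward) : Prop :=
  (∀ t1 : Ward, pay1 P1 P2 a1 t1 s2 ≤ pay1 P1 P2 a1 s1 s2) ∧
  (∀ t2 : Ward, pay2 P1 P2 a2 s1 t2 ≤ pay2 P1 P2 a2 s1 s2)

/-- Example 2: with P₁ = 1000, P₂ = 4, a₁ = 1/4, a₂ = 3/4, the profile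
(r₁, r₁) is a Nash equilibrium, it is the unique Nash equilibrium, and in
particular in the unique Nash equilibrium the hospitals do not diversify. -/
theorem stmt2 :
    IsNash 1000 4 (1/4) (3/4) r1 r1 ∧
    (∀ s1 s2 : Ward, IsNash 1000 4 (1/4) (3/4) s1 s2 ↔ (s1 = r1 ∧ s2 = r1)) ∧
    (∀ s1 s2 : Ward, IsNash 1000 4 (1/4) (3/4) s1 s2 → s1 = s2) := by
  have key : ∀ s1 s2 : Ward, IsNash 1000 4 (1/4) (3/4) s1 s2 ↔ (s1 = r1 ∧ s2 = r1) := by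
    intro s1 s2
    constructor
    · intro ⟨h1, h2⟩
      cases s1 <;> cases s2
      · exact ⟨rfl, rfl⟩
      · exact absurd (h2 r1) (by simp only [pay2, grp, reduceCtorEq, reduceIte]; norm_num)
      · exact absurd (h1 r1) (by simp only [pay1, grp, reduceCtorEq, reduceIte]; norm_num)
      · exact absurd (h1 r1) (by simp only [pay1, grp, reduceCtorEq, reduceIte]; norm_num)
    · rintro ⟨rfl, rfl⟩
      exact ⟨fun t1 => by cases t1 <;> simp only [pay1, grp, reduceCtorEq, reduceIte] <;> norm_num,
             fun t2 => by cases t2 <;> simp only [pay2, grp, reduceCtorEq, reduceIte] <;> norm_num⟩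
  refine ⟨(key r1 r1).mpr ⟨rfl, rfl⟩, key, fun s1 s2 h => ?_⟩
  obtain ⟨rfl, rfl⟩ := (key s1 s2).mp h; rfl
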